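/- (Moreau's theorem, linear time-varying consensus.) Let n ≥ 1 and let A : [0,∞) → ℝ^{n×n} be continuous and uniformly bounded, with A(t)_{ij} ≥ 0 for all i ≠ j and Σ_j A(t)_{ij} = 0 for every row i and every t ≥ 0 (Metzler with zero row sums). Suppose there exist an index ℓ, a threshold δ > 0 and an interval length T > 0 such that ∫_t^{t+T} A(s)_{iℓ} ds ≥ δ for every i ≠ ℓ and every t ≥ 0. Let x : [0,∞) → ℝⁿ be differentiable with x′(t) = A(t)·x(t) for all t ≥ 0. Then there exist constants k, λ > 0 such that max_{i,j} |x_i(t) − x_j(t)| ≤ k·e^{−λt}·max_{i,j} |x_i(0) − x_j(0)| for all t ≥ 0. -/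

import Mathlib

open Finset Set Filter
open scoped Topology

namespace Stmt14Aux

variable {n : ℕ}

lemma comp_deriv {x : ℝ → Fin n → ℝ} {v : Fin n → ℝ} {t : ℝ}
    (h : HasDerivAt x v t) (i : Fin n) : HasDerivAt (fun s => x s i) (v i) t :=
  hasDerivAt_pi.1 h i

lemma mulVec_sum {B : ℝ → Matrix (Fin n) (Fin n) ℝ} {x : ℝ → Fin n → ℝ} (s : ℝ) (i : Fin n) :
    ((B s).mulVec (x s)) i = ∑ j, B s i j * x s j := by
  simp [Matrix.mulVec, dotProduct]

lemma sup_noninc [Nonempty (Fin n)] {B : ℝ → Matrix (Fin n) (Fin n) ℝ}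
    (hmetz : ∀ t, ∀ i j, i ≠ j → 0 ≤ B t i j)
    (hrow : ∀ t, ∀ i : Fin n, ∑ j, B t i j = 0)
    {x : ℝ → Fin n → ℝ}
    (hx : ∀ t, 0 ≤ t → HasDerivAt x ((B t).mulVec (x t)) t)
    {a b : ℝ} (ha : 0 ≤ a) (hab : a ≤ b) :
    univ.sup' univ_nonempty (x b) ≤ univ.sup' univ_nonempty (x a) := by
  have hxc : ∀ t : ℝ, 0 ≤ t → ContinuousAt x t := fun t ht => (hx t ht).continuousAt
  let g : ℝ → ℝ := fun t => univ.sup' univ_nonempty (x t)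
  have hgc : ∀ t : ℝ, 0 ≤ t → ContinuousAt g t := by
    intro t ht
    exact ContinuousAt.finset_sup'_apply univ_nonempty fun i _ =>
      ((continuous_apply i).continuousAt).comp (hxc t ht)
  have key := le_gronwallBound_of_liminf_deriv_right_le (f := g) (f' := fun _ => 0)
    (δ := g a) (K := 0) (ε := 0) (a := a) (b := b)
    (fun s hs => ((hgc s (ha.trans hs.1)).continuousWithinAt))
    ?_ le_rfl (fun s _ => by simp)
  · have h2 := key b ⟨hab, le_rfl⟩
    rw [gronwallBound_K0] at h2
    show g b ≤ g a
    have h3 : g b ≤ g a + 0 * (b - a) := h2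
    linarith
  · intro s hs r hr
    have hr' : (0:ℝ) < r := hr
    have hs0 : (0:ℝ) ≤ s := ha.trans hs.1
    have hev : ∀ i : Fin n, ∀ᶠ z in 𝓝[>] s, x z i < g s + r * (z - s) := by
      intro i
      rcases lt_or_eq_of_le (Finset.le_sup' (x s) (mem_univ i) : x s i ≤ g s) with hlt | heq
      · have hc1 : ContinuousAt (fun z => x z i) s :=
          ((continuous_apply i).continuousAt).comp (hxc s hs0)
        have hc2 : ContinuousAt (fun z => g s + r * (z - s)) s := by fun_prop
        have hlt' : (fun z => x z i) s < (fun z => g s + r * (z - s)) s := by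
          show x s i < g s + r * (s - s)
          rw [sub_self, mul_zero, add_zero]; exact hlt
        exact nhdsWithin_le_nhds (hc1.eventually_lt hc2 hlt')
      · have hd : HasDerivAt (fun z => x z i) (((B s).mulVec (x s)) i) s :=
          comp_deriv (hx s hs0) i
        have hder_nonpos : ((B s).mulVec (x s)) i ≤ 0 := by
          have hsum : ((B s).mulVec (x s)) i = ∑ j, B s i j * (x s j - x s i) := by
            rw [mulVec_sum]
            simp only [mul_sub]
            rw [Finset.sum_sub_distrib, ← Finset.sum_mul, hrow s i, zero_mul, sub_zero]
          rw [hsum]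
          apply Finset.sum_nonpos
          intro j _
          rcases eq_or_ne j i with rfl | hji
          · simp
          · apply mul_nonpos_of_nonneg_of_nonpos (hmetz s i j (Ne.symm hji))
            rw [sub_nonpos, heq]
            exact Finset.le_sup' (x s) (mem_univ j)
        have hslope := hasDerivAt_iff_tendsto_slope.1 hd
        have h1 : ∀ᶠ z in 𝓝[≠] s, slope (fun z => x z i) s z < r :=
          hslope.eventually (Filter.Tendsto.eventually_lt_const (lt_of_le_of_lt hder_nonpos hr') tendsto_id)
        have h2 : ∀ᶠ z in 𝓝[>] s, slope (fun z => x z i) s z < r :=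
          nhdsWithin_mono s (fun z hz => ne_of_gt hz) h1
        filter_upwards [h2, self_mem_nhdsWithin] with z hz hz'
        have hzs : 0 < z - s := sub_pos.2 hz'
        rw [slope_def_field, div_eq_inv_mul] at hz
        have h3 : (z - s) * ((z - s)⁻¹ * (x z i - x s i)) < (z - s) * r :=
          mul_lt_mul_of_pos_left hz hzs
        rw [← mul_assoc, mul_inv_cancel₀ hzs.ne', one_mul] at h3
        have hxsi : x s i = g s := heq
        linarith
    have hall : ∀ᶠ z in 𝓝[>] s, ∀ i, x z i < g s + r * (z - s) := eventually_all.2 hev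
    apply Filter.Eventually.frequently
    filter_upwards [hall, self_mem_nhdsWithin] with z hz hz'
    have hzs : 0 < z - s := sub_pos.2 hz'
    have hgz : g z < g s + r * (z - s) := by
      apply (Finset.sup'_lt_iff univ_nonempty).2
      intro i _
      exact hz i
    show (z - s)⁻¹ * (g z - g s) < r
    calc (z - s)⁻¹ * (g z - g s) < (z - s)⁻¹ * (r * (z - s)) := by
          apply mul_lt_mul_of_pos_left _ (inv_pos.2 hzs); linarith
      _ = r := by field_simp

lemma contraction [Nonempty (Fin n)] {B : ℝ → Matrix (Fin n) (Fin n) ℝ}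
    (hBc : Continuous B)
    {Mb : ℝ} (hbd : ∀ t i j, |B t i j| ≤ Mb)
    (hmetz : ∀ t, ∀ i j, i ≠ j → 0 ≤ B t i j)
    (hrow : ∀ t, ∀ i : Fin n, ∑ j, B t i j = 0)
    (l : Fin n) {δ T : ℝ} (hδ : 0 < δ) (hT : 0 < T)
    (hconn : ∀ t, 0 ≤ t → ∀ i, i ≠ l → δ ≤ ∫ s in t..(t + T), B s i l)
    {x : ℝ → Fin n → ℝ}
    (hx : ∀ t, 0 ≤ t → HasDerivAt x ((B t).mulVec (x t)) t)
    {t : ℝ} (ht : 0 ≤ t) :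
    univ.sup' univ_nonempty (x (t + T)) ≤
      univ.sup' univ_nonempty (x t)
        - (min δ 1 * Real.exp (-(2 * (Mb * T)))) * (univ.sup' univ_nonempty (x t) - x t l) := by
  have i0 : Fin n := Classical.arbitrary _
  set Mt : ℝ := univ.sup' univ_nonempty (x t) with hMt
  set c : ℝ := Mb * T with hc
  set γ : ℝ := min δ 1 * Real.exp (-(2 * c)) with hγ
  set D : ℝ := Mt - x t l with hD
  have hMb0 : 0 ≤ Mb := le_trans (abs_nonneg _) (hbd 0 i0 i0)
  have hc0 : 0 ≤ c := mul_nonneg hMb0 hT.le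
  have hγ0 : 0 < γ := mul_pos (lt_min hδ one_pos) (Real.exp_pos _)
  have hinv : ∀ s, t ≤ s → ∀ j, x s j ≤ Mt := fun s hs j =>
    le_trans (Finset.le_sup' (x s) (mem_univ j)) (sup_noninc hmetz hrow hx ht hs)
  have hD0 : 0 ≤ D := sub_nonneg.2 (Finset.le_sup' (x t) (mem_univ l))
  have hBij : ∀ i j : Fin n, Continuous (fun s => B s i j) := fun i j => by
    exact hBc.matrix_elem i j
  have hxcA : ∀ s : ℝ, 0 ≤ s → ContinuousAt x s := fun s hs => (hx s hs).continuousAt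
  have hxOn : ∀ i : Fin n, ContinuousOn (fun s => x s i) (Ici 0) := fun i s hs =>
    (((continuous_apply i).continuousAt).comp (hxcA s hs)).continuousWithinAt
  -- row-sum facts
  have hri : ∀ s (i : Fin n), -(B s i i) = ∑ j ∈ univ.erase i, B s i j := by
    intro s i
    have h := hrow s i
    rw [← Finset.add_sum_erase univ (fun j => B s i j) (mem_univ i)] at h
    linarith
  have hr_nonneg : ∀ s (i : Fin n), 0 ≤ -(B s i i) := by
    intro s i
    rw [hri s i]
    exact Finset.sum_nonneg fun j hj => hmetz s i j (Ne.symm (Finset.mem_erase.1 hj).1)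
  have hr_le : ∀ s (i : Fin n), -(B s i i) ≤ Mb := fun s i =>
    le_trans (neg_le_abs _) (hbd s i i)
  -- integrating factor exponent
  set R : Fin n → ℝ → ℝ := fun i s => ∫ u in t..s, -(B u i i) with hR0
  have hrc : ∀ i : Fin n, Continuous (fun u => -(B u i i)) := fun i => (hBij i i).neg
  have hRd : ∀ (i : Fin n) s, HasDerivAt (R i) (-(B s i i)) s := fun i s =>
    ((hrc i).integral_hasStrictDerivAt t s).hasDerivAt
  have hRt : ∀ i : Fin n, R i t = 0 := fun i => intervalIntegral.integral_same
  have hR_nonneg : ∀ (i : Fin n) s, t ≤ s → 0 ≤ R i s := fun i s hs =>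
    intervalIntegral.integral_nonneg hs fun u _ => hr_nonneg u i
  have hR_le : ∀ (i : Fin n) s, t ≤ s → s ≤ t + T → R i s ≤ c := by
    intro i s hs hsT
    have h1 : R i s ≤ ∫ _ in t..s, Mb := by
      apply intervalIntegral.integral_mono_on hs
        (((hrc i).intervalIntegrable t s)) (intervalIntegrable_const)
      exact fun u _ => hr_le u i
    rw [intervalIntegral.integral_const, smul_eq_mul] at h1
    calc R i s ≤ (s - t) * Mb := h1
      _ ≤ T * Mb := by apply mul_le_mul_of_nonneg_right _ hMb0; linarith
      _ = c := by rw [hc]; ring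
  -- derivative of the integrating-factor expression
  set Dφ : Fin n → ℝ → ℝ :=
    fun i s => Real.exp (R i s) * ((-(B s i i)) * (Mt - x s i) - ((B s).mulVec (x s)) i) with hDφ
  have hφd : ∀ (i : Fin n) s, 0 ≤ s →
      HasDerivAt (fun u => Real.exp (R i u) * (Mt - x u i)) (Dφ i s) s := by
    intro i s hs
    have h1 : HasDerivAt (fun u => Real.exp (R i u)) (Real.exp (R i s) * (-(B s i i))) s :=
      (hRd i s).exp
    have h2 : HasDerivAt (fun u => Mt - x u i) (0 - (((B s).mulVec (x s)) i)) s :=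
      (hasDerivAt_const s Mt).sub (comp_deriv (hx s hs) i)
    have : HasDerivAt (fun u => Real.exp (R i u) * (Mt - x u i))
        (Real.exp (R i s) * (-(B s i i)) * (Mt - x s i) + Real.exp (R i s) * (0 - (((B s).mulVec (x s)) i))) s := h1.mul h2
    convert this using 1
    show Real.exp (R i s) * ((-(B s i i)) * (Mt - x s i) - ((B s).mulVec (x s)) i) = _; ring
  -- continuity of Dφ on [0, ∞)
  have hdOn : ∀ i : Fin n, ContinuousOn (fun s => ((B s).mulVec (x s)) i) (Ici 0) := by
    intro i
    have : ∀ s : ℝ, ((B s).mulVec (x s)) i = ∑ j, B s i j * x s j := fun s => mulVec_sum s i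
    simp only [this]
    exact continuousOn_finset_sum _ fun j _ => ((hBij i j).continuousOn).mul (hxOn j)
  have hDφOn : ∀ i : Fin n, ContinuousOn (Dφ i) (Ici 0) := by
    intro i
    simp only [hDφ]
    have hRc : Continuous (R i) := by
      have : ∀ s, HasDerivAt (R i) (-(B s i i)) s := hRd i
      exact continuous_iff_continuousAt.2 fun s => (this s).continuousAt
    exact ((Real.continuous_exp.comp hRc).continuousOn).mul
      ((((hrc i).continuousOn).mul (continuousOn_const.sub (hxOn i))).sub (hdOn i))
  -- key algebraic identity
  have hkey : ∀ s (i : Fin n),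
      (-(B s i i)) * (Mt - x s i) - ((B s).mulVec (x s)) i
        = ∑ j ∈ univ.erase i, B s i j * (Mt - x s j) := by
    intro s i
    have e1 := hri s i
    have e2 : B s i i = -∑ j ∈ univ.erase i, B s i j := by linarith
    rw [mulVec_sum, ← Finset.add_sum_erase univ (fun j => B s i j * x s j) (mem_univ i), e1, e2]
    simp only [mul_sub, Finset.sum_sub_distrib]
    simp only [← Finset.sum_mul]
    ring
  -- pointwise nonnegativity of Dφ on [t, ∞)
  have hDφ_nonneg : ∀ (i : Fin n) s, t ≤ s → 0 ≤ Dφ i s := by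
    intro i s hs
    simp only [hDφ]
    apply mul_nonneg (Real.exp_pos _).le
    rw [hkey s i]
    exact Finset.sum_nonneg fun j hj =>
      mul_nonneg (hmetz s i j (Ne.symm (Finset.mem_erase.1 hj).1))
        (sub_nonneg.2 (hinv s hs j))
  -- FTC
  have hFTC : ∀ (i : Fin n) s, t ≤ s →
      (∫ u in t..s, Dφ i u) = Real.exp (R i s) * (Mt - x s i) - Real.exp (R i t) * (Mt - x t i) := by
    intro i s hs
    apply intervalIntegral.integral_eq_sub_of_hasDerivAt
    · intro u hu
      rw [uIcc_of_le hs] at hu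
      exact hφd i u (le_trans ht hu.1)
    · apply ContinuousOn.intervalIntegrable
      apply (hDφOn i).mono
      rw [uIcc_of_le hs]
      exact fun u hu => le_trans ht hu.1
  -- monotonicity of the integrating-factor expression
  have hmono : ∀ (i : Fin n) s, t ≤ s →
      Mt - x t i ≤ Real.exp (R i s) * (Mt - x s i) := by
    intro i s hs
    have h1 := hFTC i s hs
    have h2 : 0 ≤ ∫ u in t..s, Dφ i u :=
      intervalIntegral.integral_nonneg hs fun u hu => hDφ_nonneg i u hu.1
    rw [hRt i, Real.exp_zero, one_mul] at h1
    linarith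
  -- lower bound for the target coordinate
  have hl_lower : ∀ s, t ≤ s → s ≤ t + T → Real.exp (-c) * D ≤ Mt - x s l := by
    intro s hs hsT
    have h1 := hmono l s hs
    have hx0 : 0 ≤ Mt - x s l := sub_nonneg.2 (hinv s hs l)
    have h2 : Real.exp (R l s) ≤ Real.exp c := Real.exp_le_exp.2 (hR_le l s hs hsT)
    have h3 : D ≤ Real.exp c * (Mt - x s l) := by
      calc D ≤ Real.exp (R l s) * (Mt - x s l) := h1
        _ ≤ Real.exp c * (Mt - x s l) := mul_le_mul_of_nonneg_right h2 hx0
    calc Real.exp (-c) * D ≤ Real.exp (-c) * (Real.exp c * (Mt - x s l)) :=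
          mul_le_mul_of_nonneg_left h3 (Real.exp_pos _).le
      _ = Mt - x s l := by rw [← mul_assoc, ← Real.exp_add]; simp
  -- quantitative bound for i ≠ l
  have hquant : ∀ i : Fin n, i ≠ l →
      Mt - x t i + δ * (Real.exp (-c) * D) ≤ Real.exp (R i (t + T)) * (Mt - x (t + T) i) := by
    intro i hil
    have hTle : t ≤ t + T := by linarith
    have h1 := hFTC i (t + T) hTle
    have hlowint : δ * (Real.exp (-c) * D) ≤ ∫ u in t..(t + T), Dφ i u := by
      have hstep : ∀ u ∈ Icc t (t + T), B u i l * (Real.exp (-c) * D) ≤ Dφ i u := by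
        intro u hu
        have hS : B u i l * (Mt - x u l) ≤ ∑ j ∈ univ.erase i, B u i j * (Mt - x u j) := by
          apply Finset.single_le_sum (f := fun j => B u i j * (Mt - x u j))
          · exact fun j hj => mul_nonneg (hmetz u i j (Ne.symm (Finset.mem_erase.1 hj).1))
              (sub_nonneg.2 (hinv u hu.1 j))
          · exact Finset.mem_erase.2 ⟨Ne.symm hil, mem_univ l⟩
        have hBl : B u i l * (Real.exp (-c) * D) ≤ B u i l * (Mt - x u l) :=
          mul_le_mul_of_nonneg_left (hl_lower u hu.1 hu.2) (hmetz u i l hil)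
        have hSnn : 0 ≤ ∑ j ∈ univ.erase i, B u i j * (Mt - x u j) :=
          le_trans (le_trans (mul_nonneg (hmetz u i l hil)
            (mul_nonneg (Real.exp_pos _).le hD0)) hBl) hS
        have hE1 : (1:ℝ) ≤ Real.exp (R i u) := Real.one_le_exp (hR_nonneg i u hu.1)
        calc B u i l * (Real.exp (-c) * D) ≤ ∑ j ∈ univ.erase i, B u i j * (Mt - x u j) :=
              le_trans hBl hS
          _ = 1 * (∑ j ∈ univ.erase i, B u i j * (Mt - x u j)) := (one_mul _).symm
          _ ≤ Real.exp (R i u) * (∑ j ∈ univ.erase i, B u i j * (Mt - x u j)) :=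
              mul_le_mul_of_nonneg_right hE1 hSnn
          _ = Dφ i u := by simp only [hDφ]; rw [hkey u i]
      have hmono2 : (∫ u in t..(t + T), B u i l * (Real.exp (-c) * D))
          ≤ ∫ u in t..(t + T), Dφ i u := by
        apply intervalIntegral.integral_mono_on hTle
          (((hBij i l).mul continuous_const).intervalIntegrable t (t + T))
          (((hDφOn i).mono ?_).intervalIntegrable) hstep
        rw [uIcc_of_le hTle]
        exact fun u hu => le_trans ht hu.1
      have heq2 : (∫ u in t..(t + T), B u i l * (Real.exp (-c) * D))
          = (∫ u in t..(t + T), B u i l) * (Real.exp (-c) * D) :=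
        intervalIntegral.integral_mul_const _ _
      have h4 : δ * (Real.exp (-c) * D) ≤ (∫ u in t..(t + T), B u i l) * (Real.exp (-c) * D) :=
        mul_le_mul_of_nonneg_right (hconn t ht i hil) (mul_nonneg (Real.exp_pos _).le hD0)
      linarith
    rw [hRt i, Real.exp_zero, one_mul] at h1
    linarith
  -- conclude: every coordinate at time t+T is at most Mt - γ * D
  have hfinal : ∀ i : Fin n, x (t + T) i ≤ Mt - γ * D := by
    intro i
    have hTle : t ≤ t + T := by linarith
    rcases eq_or_ne i l with rfl | hil
    · have h1 := hl_lower (t + T) hTle le_rfl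
      have hγe : γ ≤ Real.exp (-c) := by
        rw [hγ]
        calc min δ 1 * Real.exp (-(2 * c)) ≤ 1 * Real.exp (-(2 * c)) :=
              mul_le_mul_of_nonneg_right (min_le_right _ _) (Real.exp_pos _).le
          _ = Real.exp (-(2 * c)) := one_mul _
          _ ≤ Real.exp (-c) := Real.exp_le_exp.2 (by linarith)
      nlinarith [mul_le_mul_of_nonneg_right hγe hD0]
    · have h1 := hquant i hil
      set E : ℝ := Real.exp (R i (t + T)) with hE
      have hE1 : (1:ℝ) ≤ E := Real.one_le_exp (hR_nonneg i (t + T) hTle)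
      have hEc : E ≤ Real.exp c := Real.exp_le_exp.2 (hR_le i (t + T) hTle le_rfl)
      have hDt : 0 ≤ Mt - x t i := sub_nonneg.2 (Finset.le_sup' (x t) (mem_univ i))
      have hγE : γ * E ≤ δ * Real.exp (-c) := by
        calc γ * E ≤ γ * Real.exp c := mul_le_mul_of_nonneg_left hEc hγ0.le
          _ = min δ 1 * (Real.exp (-(2 * c)) * Real.exp c) := by rw [hγ]; ring
          _ = min δ 1 * Real.exp (-c) := by rw [← Real.exp_add]; ring_nf
          _ ≤ δ * Real.exp (-c) :=
              mul_le_mul_of_nonneg_right (min_le_left _ _) (Real.exp_pos _).le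
      have h2 : γ * D * E ≤ E * (Mt - x (t + T) i) := by
        calc γ * D * E = (γ * E) * D := by ring
          _ ≤ (δ * Real.exp (-c)) * D := mul_le_mul_of_nonneg_right hγE hD0
          _ = δ * (Real.exp (-c) * D) := by ring
          _ ≤ E * (Mt - x (t + T) i) := by linarith
      have hEpos : 0 < E := lt_of_lt_of_le one_pos hE1
      have h3 : γ * D ≤ Mt - x (t + T) i := by
        have := (mul_le_mul_iff_of_pos_right hEpos).1 (by linarith [h2] : (γ * D) * E ≤ (Mt - x (t + T) i) * E)
        linarith
      linarith
  exact Finset.sup'_le _ _ fun i _ => hfinal i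



lemma iterate_bound [Nonempty (Fin n)] {B : ℝ → Matrix (Fin n) (Fin n) ℝ}
    (hBc : Continuous B)
    {Mb : ℝ} (hbd : ∀ t i j, |B t i j| ≤ Mb)
    (hmetz : ∀ t, ∀ i j, i ≠ j → 0 ≤ B t i j)
    (hrow : ∀ t, ∀ i : Fin n, ∑ j, B t i j = 0)
    (l : Fin n) {δ T : ℝ} (hδ : 0 < δ) (hT : 0 < T)
    (hconn : ∀ t, 0 ≤ t → ∀ i, i ≠ l → δ ≤ ∫ s in t..(t + T), B s i l)
    {x : ℝ → Fin n → ℝ}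
    (hx : ∀ t, 0 ≤ t → HasDerivAt x ((B t).mulVec (x t)) t) :
    ∃ k lam : ℝ, 0 < k ∧ 0 < lam ∧
      ∀ t, 0 ≤ t → ∀ i j,
        |x t i - x t j| ≤
          k * Real.exp (-lam * t) * ⨆ p : Fin n × Fin n, |x 0 p.1 - x 0 p.2| := by
  have i0 : Fin n := Classical.arbitrary _
  set y : ℝ → Fin n → ℝ := fun s => -(x s) with hy
  have hxy : ∀ s (i : Fin n), y s i = -(x s i) := fun s i => rfl
  have hyd : ∀ u, 0 ≤ u → HasDerivAt y ((B u).mulVec (y u)) u := by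
    intro u hu
    have h1 := (hx u hu).neg
    have h2 : (B u).mulVec (y u) = -((B u).mulVec (x u)) := by
      rw [hy]; exact Matrix.mulVec_neg _ _
    rw [h2]; exact h1
  set g : ℝ → ℝ := fun s => univ.sup' univ_nonempty (x s) with hg
  set h : ℝ → ℝ := fun s => univ.sup' univ_nonempty (y s) with hh
  set Dm : ℝ → ℝ := fun s => g s + h s with hDm
  have hDm0 : ∀ s : ℝ, 0 ≤ Dm s := by
    intro s
    have h1 : x s i0 ≤ g s := Finset.le_sup' (x s) (mem_univ i0)
    have h2 : -(x s i0) ≤ h s := Finset.le_sup' (y s) (mem_univ i0)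
    simp only [hDm]; linarith
  have hpair : ∀ s (i j : Fin n), |x s i - x s j| ≤ Dm s := by
    intro s i j
    have h1 : x s i ≤ g s := Finset.le_sup' (x s) (mem_univ i)
    have h2 : -(x s j) ≤ h s := Finset.le_sup' (y s) (mem_univ j)
    have h3 : x s j ≤ g s := Finset.le_sup' (x s) (mem_univ j)
    have h4 : -(x s i) ≤ h s := Finset.le_sup' (y s) (mem_univ i)
    rw [abs_sub_le_iff]
    constructor <;> (simp only [hDm]; linarith)
  have hmonoD : ∀ a b : ℝ, 0 ≤ a → a ≤ b → Dm b ≤ Dm a := by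
    intro a b ha hab
    exact add_le_add (sup_noninc hmetz hrow hx ha hab) (sup_noninc hmetz hrow hyd ha hab)
  set γ : ℝ := min δ 1 * Real.exp (-(2 * (Mb * T))) with hγ
  have hγ0 : 0 < γ := mul_pos (lt_min hδ one_pos) (Real.exp_pos _)
  set γ' : ℝ := min γ (1/2) with hγ'
  have hγ'0 : 0 < γ' := lt_min hγ0 (by norm_num)
  have hγ'γ : γ' ≤ γ := min_le_left _ _
  have hγ'half : γ' ≤ 1/2 := min_le_right _ _
  set q : ℝ := 1 - γ' with hq
  have hq0 : 0 < q := by simp only [hq]; linarith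
  have hq1 : q < 1 := by simp only [hq]; linarith
  have hqhalf : (1:ℝ)/2 ≤ q := by simp only [hq]; linarith
  have hcontr : ∀ t : ℝ, 0 ≤ t → Dm (t + T) ≤ q * Dm t := by
    intro t ht
    have c1 := contraction hBc hbd hmetz hrow l hδ hT hconn hx ht
    have c2 := contraction hBc hbd hmetz hrow l hδ hT hconn hyd ht
    have e1 : γ * (g t - x t l) + γ * (h t - y t l) = γ * (g t + h t) := by
      have : y t l = -(x t l) := rfl
      rw [this]; ring
    have c1' : g (t + T) ≤ g t - γ * (g t - x t l) := c1
    have c2' : h (t + T) ≤ h t - γ * (h t - y t l) := c2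
    have hmain : Dm (t + T) ≤ Dm t - γ * Dm t := by simp only [hDm]; linarith
    have e2 : γ' * Dm t ≤ γ * Dm t := mul_le_mul_of_nonneg_right hγ'γ (hDm0 t)
    have hgoal : q * Dm t = Dm t - γ' * Dm t := by ring
    rw [hgoal]
    linarith
  have hiter : ∀ k : ℕ, Dm ((k : ℝ) * T) ≤ q ^ k * Dm 0 := by
    intro k
    induction k with
    | zero => simp
    | succ k ih =>
      have hk0 : (0:ℝ) ≤ (k : ℝ) * T := mul_nonneg (Nat.cast_nonneg k) hT.le
      have e1 : ((k + 1 : ℕ) : ℝ) * T = (k : ℝ) * T + T := by push_cast; ring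
      rw [e1]
      calc Dm ((k : ℝ) * T + T) ≤ q * Dm ((k : ℝ) * T) := hcontr _ hk0
        _ ≤ q * (q ^ k * Dm 0) := mul_le_mul_of_nonneg_left ih hq0.le
        _ = q ^ (k + 1) * Dm 0 := by ring
  set S : ℝ := ⨆ p : Fin n × Fin n, |x 0 p.1 - x 0 p.2| with hSdef
  have hbdd : BddAbove (Set.range fun p : Fin n × Fin n => |x 0 p.1 - x 0 p.2|) :=
    Set.Finite.bddAbove (Set.finite_range _)
  have hS0 : 0 ≤ S := by
    have := le_ciSup hbdd (i0, i0)
    simpa using this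
  have hSD : Dm 0 ≤ S := by
    obtain ⟨i1, _, hgi⟩ := Finset.exists_mem_eq_sup' (univ_nonempty) (x 0)
    obtain ⟨j1, _, hhj⟩ := Finset.exists_mem_eq_sup' (univ_nonempty) (y 0)
    have e1 : Dm 0 = x 0 i1 - x 0 j1 := by
      simp only [hDm, hg, hh]
      rw [hgi, hhj]
      show x 0 i1 + -(x 0 j1) = x 0 i1 - x 0 j1
      ring
    calc Dm 0 = x 0 i1 - x 0 j1 := e1
      _ ≤ |x 0 i1 - x 0 j1| := le_abs_self _
      _ ≤ S := le_ciSup hbdd (i1, j1)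
  set lam : ℝ := -Real.log q / T with hlam
  have hlam0 : 0 < lam := div_pos (neg_pos.2 (Real.log_neg hq0 hq1)) hT
  refine ⟨2, lam, by norm_num, hlam0, ?_⟩
  intro t ht i j
  set k : ℕ := ⌊t / T⌋₊ with hk
  have hk1 : (k : ℝ) * T ≤ t := by
    have h1 : (k : ℝ) ≤ t / T := Nat.floor_le (div_nonneg ht hT.le)
    calc (k : ℝ) * T ≤ (t / T) * T := mul_le_mul_of_nonneg_right h1 hT.le
      _ = t := by field_simp
  have hk2 : t / T < (k : ℝ) + 1 := Nat.lt_floor_add_one _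
  have hkn : (0:ℝ) ≤ (k : ℝ) * T := mul_nonneg (Nat.cast_nonneg k) hT.le
  have hqk : q ^ k ≤ 2 * Real.exp (-lam * t) := by
    have hlogq : Real.log q < 0 := Real.log_neg hq0 hq1
    have e1 : q ^ k = Real.exp ((k : ℝ) * Real.log q) := by
      rw [Real.exp_nat_mul, Real.exp_log hq0]
    have h2 : (k : ℝ) * Real.log q ≤ (t / T - 1) * Real.log q := by
      have : t / T - 1 ≤ (k : ℝ) := by linarith
      nlinarith
    have e3 : (t / T - 1) * Real.log q = -lam * t - Real.log q := by
      simp only [hlam]; field_simp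
    have h4 : q ^ k ≤ Real.exp (-lam * t - Real.log q) := by
      rw [e1]; exact Real.exp_le_exp.2 (by linarith)
    have e5 : Real.exp (-lam * t - Real.log q) = Real.exp (-lam * t) * q⁻¹ := by
      rw [Real.exp_sub, Real.exp_log hq0, div_eq_mul_inv]
    have h6 : q⁻¹ ≤ 2 := by
      rw [inv_le_comm₀ hq0 (by norm_num : (0:ℝ) < 2)]
      linarith
    calc q ^ k ≤ Real.exp (-lam * t) * q⁻¹ := by rw [← e5]; exact h4
      _ ≤ Real.exp (-lam * t) * 2 := mul_le_mul_of_nonneg_left h6 (Real.exp_pos _).le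
      _ = 2 * Real.exp (-lam * t) := by ring
  calc |x t i - x t j| ≤ Dm t := hpair t i j
    _ ≤ Dm ((k : ℝ) * T) := hmonoD _ _ hkn hk1
    _ ≤ q ^ k * Dm 0 := hiter k
    _ ≤ q ^ k * S := mul_le_mul_of_nonneg_left hSD (pow_nonneg hq0.le k)
    _ ≤ (2 * Real.exp (-lam * t)) * S := mul_le_mul_of_nonneg_right hqk hS0
    _ = 2 * Real.exp (-lam * t) * S := by ring

end Stmt14Aux

/-- Moreau's theorem: an LTV system `x' = A(t)x` with `A(t)` Metzler with
zero row sums, continuous and uniformly bounded on `[0,∞)`, satisfying the accumulated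
connectivity condition `∫_t^{t+T} A(s)_{iℓ} ds ≥ δ` for all `i ≠ ℓ` and `t ≥ 0`,
achieves exponential consensus. -/
theorem stmt14 {n : ℕ} (hn : 1 ≤ n) (A : ℝ → Matrix (Fin n) (Fin n) ℝ)
    (hcont : ContinuousOn A (Set.Ici 0))
    (hbdd : ∃ M : ℝ, ∀ t, 0 ≤ t → ∀ i j, |A t i j| ≤ M)
    (hmetzler : ∀ t, 0 ≤ t → ∀ i j, i ≠ j → 0 ≤ A t i j)
    (hrow : ∀ t, 0 ≤ t → ∀ i, ∑ j, A t i j = 0)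
    (l : Fin n) (δ T : ℝ) (hδ : 0 < δ) (hT : 0 < T)
    (hconn : ∀ t, 0 ≤ t → ∀ i, i ≠ l → δ ≤ ∫ s in t..(t + T), A s i l)
    (x : ℝ → Fin n → ℝ)
    (hx : ∀ t, 0 ≤ t → HasDerivAt x ((A t).mulVec (x t)) t) :
    ∃ k lam : ℝ, 0 < k ∧ 0 < lam ∧
      ∀ t, 0 ≤ t → ∀ i j,
        |x t i - x t j| ≤
          k * Real.exp (-lam * t) * ⨆ p : Fin n × Fin n, |x 0 p.1 - x 0 p.2| := by
  haveI : Nonempty (Fin n) := Fin.pos_iff_nonempty.mp hn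
  classical
  set B : ℝ → Matrix (Fin n) (Fin n) ℝ := fun u => A (max u 0) with hB
  have hmax : ∀ u : ℝ, 0 ≤ max u 0 := fun u => le_max_right u 0
  have hBeq : ∀ u : ℝ, 0 ≤ u → B u = A u := by
    intro u hu; simp only [hB]; rw [max_eq_left hu]
  have hBc : Continuous B :=
    hcont.comp_continuous (continuous_id.max continuous_const) (fun u => hmax u)
  obtain ⟨M0, hM0⟩ := hbdd
  have hbd : ∀ u : ℝ, ∀ i j, |B u i j| ≤ max M0 0 :=
    fun u i j => le_trans (hM0 _ (hmax u) i j) (le_max_left _ _)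
  have hmetzB : ∀ u : ℝ, ∀ i j, i ≠ j → 0 ≤ B u i j :=
    fun u i j hij => hmetzler _ (hmax u) i j hij
  have hrowB : ∀ u : ℝ, ∀ i, ∑ j, B u i j = 0 := fun u i => hrow _ (hmax u) i
  have hxB : ∀ u : ℝ, 0 ≤ u → HasDerivAt x ((B u).mulVec (x u)) u := by
    intro u hu; rw [hBeq u hu]; exact hx u hu
  have hconnB : ∀ u : ℝ, 0 ≤ u → ∀ i, i ≠ l → δ ≤ ∫ s in u..(u + T), B s i l := by
    intro u hu i hi
    have heq : ∀ s ∈ Set.uIcc u (u + T), B s i l = A s i l := by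
      intro s hs
      rw [Set.uIcc_of_le (by linarith : u ≤ u + T)] at hs
      rw [hBeq s (le_trans hu hs.1)]
    rw [intervalIntegral.integral_congr heq]
    exact hconn u hu i hi
  exact Stmt14Aux.iterate_bound hBc hbd hmetzB hrowB l hδ hT hconnB hxB
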